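/- Let B ⊆ ((ℕ×ℕ) → ℕ) × ((ℕ×ℕ) → ℝ) and let A = {x : {y : (x,y) ∈ B} ∈ ⅁ℝ_{ω²}}. Let 𝔾_B be the game of length ω³ on ℕ in which: the moves at the positions (0,m,n) form an element x ∈ (ℕ×ℕ) → ℕ; for each i ≥ 0 and m ∈ ℕ, within the block of positions (1+i, m, n) (n ∈ ℕ), the real y(i,m) ∈ ℝ is defined as the sequence of moves made at the positions with n even if m is even (so the digits are supplied by Player I) and at the positions with n odd if m is odd (so the digits are supplied by Player II), the remaining moves of that block being ignored; Player I wins a run of 𝔾_B iff (x, y) ∈ B, where y ∈ (ℕ×ℕ) → ℝ. Then: (i) if B is open in the product topology, the payoff of 𝔾_B is an open subset of (ℕ×ℕ×ℕ) → ℕ; and (ii) if a player has a winning strategy Σ in 𝔾_B, then the restriction of Σ to the positions (0,m,n) is a winning strategy for that same player in the game of length ω² on ℕ with payoff A. In particular, if 𝔾_B is determined then the game of length ω² on ℕ with payoff A is determined. -/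

import Mathlib

noncomputable section

/-- The Baire space `ℕ → ℕ`, denoted ℝ in the paper. -/
abbrev Baire : Type := ℕ → ℕ

/-- The finite sequence `(x 0, …, x (m-1))`. -/
def resSeq {α : Type*} (x : ℕ → α) (m : ℕ) : List α := List.ofFn fun i : Fin m => x i

/-- `σ` is a winning strategy for Player I in the length-ω game on `X` with payoff `A`. -/
def WinStratI {X : Type*} (A : Set (ℕ → X)) (σ : List X → X) : Prop :=
  ∀ x : ℕ → X, (∀ n, x (2 * n) = σ (resSeq x (2 * n))) → x ∈ A

/-- `τ` is a winning strategy for Player II in the length-ω game on `X` with payoff `A`. -/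
def WinStratII {X : Type*} (A : Set (ℕ → X)) (τ : List X → X) : Prop :=
  ∀ x : ℕ → X, (∀ n, x (2 * n + 1) = τ (resSeq x (2 * n + 1))) → x ∉ A

/-- The length-ω game on `X` with payoff `A` is determined. -/
def DeterminedOmega {X : Type*} (A : Set (ℕ → X)) : Prop :=
  (∃ σ, WinStratI A σ) ∨ (∃ τ, WinStratII A τ)

/-- Lexicographic order on ℕ × ℕ. -/
def lex2 (p q : ℕ × ℕ) : Prop := p.1 < q.1 ∨ (p.1 = q.1 ∧ p.2 < q.2)

/-- A strategy in a game of length ω²: it assigns a move to each position, as a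
function of the partial play on the lexicographic initial segment below the position. -/
abbrev Strat2 (X : Type*) := ∀ p : ℕ × ℕ, ({q : ℕ × ℕ // lex2 q p} → X) → X

/-- `σ` is winning for Player I (who moves at `(m,n)` for `n` even) in the game of
length ω² on `X` with payoff `A`. -/
def WinStrat2I {X : Type*} (A : Set ((ℕ × ℕ) → X)) (σ : Strat2 X) : Prop :=
  ∀ x : (ℕ × ℕ) → X, (∀ p : ℕ × ℕ, Even p.2 → x p = σ p fun q => x q.1) → x ∈ A

/-- `τ` is winning for Player II (who moves at `(m,n)` for `n` odd) in the game of
length ω² on `X` with payoff `A`. -/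
def WinStrat2II {X : Type*} (A : Set ((ℕ × ℕ) → X)) (τ : Strat2 X) : Prop :=
  ∀ x : (ℕ × ℕ) → X, (∀ p : ℕ × ℕ, Odd p.2 → x p = τ p fun q => x q.1) → x ∉ A

/-- The game of length ω² on `X` with payoff `A` is determined. -/
def Determined2 {X : Type*} (A : Set ((ℕ × ℕ) → X)) : Prop :=
  (∃ σ, WinStrat2I A σ) ∨ (∃ τ, WinStrat2II A τ)

/-- Lexicographic order on ℕ × ℕ × ℕ. -/
def lex3 (p q : ℕ × ℕ × ℕ) : Prop := p.1 < q.1 ∨ (p.1 = q.1 ∧ lex2 p.2 q.2)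

/-- A strategy in a game of length ω³. -/
abbrev Strat3 (X : Type*) := ∀ p : ℕ × ℕ × ℕ, ({q : ℕ × ℕ × ℕ // lex3 q p} → X) → X

/-- `σ` is winning for Player I (who moves at `(k,m,n)` for `n` even) in the game of
length ω³ on `X` with payoff `A`. -/
def WinStrat3I {X : Type*} (A : Set ((ℕ × ℕ × ℕ) → X)) (σ : Strat3 X) : Prop :=
  ∀ x : (ℕ × ℕ × ℕ) → X, (∀ p : ℕ × ℕ × ℕ, Even p.2.2 → x p = σ p fun q => x q.1) → x ∈ A

/-- `τ` is winning for Player II in the game of length ω³ on `X` with payoff `A`. -/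
def WinStrat3II {X : Type*} (A : Set ((ℕ × ℕ × ℕ) → X)) (τ : Strat3 X) : Prop :=
  ∀ x : (ℕ × ℕ × ℕ) → X, (∀ p : ℕ × ℕ × ℕ, Odd p.2.2 → x p = τ p fun q => x q.1) → x ∉ A

/-- The game of length ω³ on `X` with payoff `A` is determined. -/
def Determined3 {X : Type*} (A : Set ((ℕ × ℕ × ℕ) → X)) : Prop :=
  (∃ σ, WinStrat3I A σ) ∨ (∃ τ, WinStrat3II A τ)

/-- `A ∈ ⅁ℝ_{ω²}`: Player I has a winning strategy in the game of length ω² on ℝ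
(the Baire space) with payoff `A`. -/
def GameR2I (A : Set ((ℕ × ℕ) → Baire)) : Prop := ∃ σ : Strat2 Baire, WinStrat2I A σ


/-- The sequence `x ∈ (ℕ×ℕ) → ℕ` formed by the moves at positions `(0,m,n)`. -/
def xPart (w : (ℕ × ℕ × ℕ) → ℕ) : (ℕ × ℕ) → ℕ := fun q => w (0, q.1, q.2)

/-- The real `y(i,m)` extracted from the block of positions `(1+i, m, n)`: its digits
are the moves with `n` even if `m` is even (supplied by Player I) and the moves with
`n` odd if `m` is odd (supplied by Player II). -/
def yPart (w : (ℕ × ℕ × ℕ) → ℕ) : (ℕ × ℕ) → Baire := fun q =>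
  if Even q.2 then (fun n => w (1 + q.1, q.2, 2 * n)) else (fun n => w (1 + q.1, q.2, 2 * n + 1))

/-- The payoff of the game `𝔾_B`: Player I wins the run `w` iff `(x, y) ∈ B`. -/
def GBpayoff (B : Set (((ℕ × ℕ) → ℕ) × ((ℕ × ℕ) → Baire))) : Set ((ℕ × ℕ × ℕ) → ℕ) :=
  {w | (xPart w, yPart w) ∈ B}

/-- `A = {x : {y : (x,y) ∈ B} ∈ ⅁ℝ_{ω²}}`. -/
def AofB (B : Set (((ℕ × ℕ) → ℕ) × ((ℕ × ℕ) → Baire))) : Set ((ℕ × ℕ) → ℕ) :=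
  {x | GameR2I {y | (x, y) ∈ B}}

/-- The restriction of a length-ω³ strategy to the positions `(0,m,n)`, viewed as a
length-ω² strategy. -/
def restrict0 {X : Type*} (S : Strat3 X) : Strat2 X := fun q f =>
  S (0, q.1, q.2) fun r => f ⟨r.1.2, (r.2.resolve_left (Nat.not_lt_zero _)).2⟩

/-! ### Auxiliary machinery -/

lemma lex3_wf : WellFounded lex3 := by
  have h : WellFounded (Prod.Lex (α := ℕ) (β := ℕ × ℕ) (· < ·) (Prod.Lex (· < ·) (· < ·))) :=
    (Nat.lt_wfRel.wf).prod_lex ((Nat.lt_wfRel.wf).prod_lex Nat.lt_wfRel.wf)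
  refine Subrelation.wf (fun {p q} hpq => ?_) h
  obtain ⟨a, b, c⟩ := p; obtain ⟨d, e, f⟩ := q
  rcases hpq with h1 | ⟨h1, h2 | ⟨h2, h3⟩⟩
  · exact Prod.Lex.left _ _ h1
  · subst h1; exact Prod.Lex.right _ (Prod.Lex.left _ _ h2)
  · subst h1; subst h2; exact Prod.Lex.right _ (Prod.Lex.right _ h3)

lemma lex3_trans {a b c : ℕ × ℕ × ℕ} (h1 : lex3 a b) (h2 : lex3 b c) : lex3 a c := by
  simp only [lex3, lex2] at *; omega

/-- Positions in the block of `(i+1, m)` are `lex3`-below any position `p` with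
`p.1 ≠ 0` when `(i, m)` is `lex2`-below `(p.1 - 1, p.2.1)`. -/
lemma lex3_block {p : ℕ × ℕ × ℕ} (h0 : ¬ p.1 = 0) {r : ℕ × ℕ}
    (hr : lex2 r (p.1 - 1, p.2.1)) (k : ℕ) : lex3 (1 + r.1, r.2, k) p := by
  simp only [lex2, lex3] at *; omega

/-- The auxiliary run used for Player I: level `0` is `x`; in block `(1+i, m)`,
even positions follow `S`, odd positions are `0` for even `m` and the digits of
`y (i, m)` for odd `m`. -/
def wI (S : Strat3 ℕ) (x : (ℕ × ℕ) → ℕ) (y : (ℕ × ℕ) → Baire) : (ℕ × ℕ × ℕ) → ℕ :=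
  lex3_wf.fix fun p rec =>
    if p.1 = 0 then x p.2
    else if Even p.2.2 then S p (fun r => rec r.1 r.2)
    else if Even p.2.1 then 0
    else y (p.1 - 1, p.2.1) (p.2.2 / 2)

lemma wI_eq (S : Strat3 ℕ) (x : (ℕ × ℕ) → ℕ) (y : (ℕ × ℕ) → Baire) (p : ℕ × ℕ × ℕ) :
    wI S x y p =
      if p.1 = 0 then x p.2
      else if Even p.2.2 then S p (fun r => wI S x y r.1)
      else if Even p.2.1 then 0
      else y (p.1 - 1, p.2.1) (p.2.2 / 2) := by
  conv_lhs => rw [wI, WellFounded.fix_eq]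
  rfl

/-- The auxiliary run used for Player II: level `0` is `x`; in block `(1+i, m)`,
odd positions follow `S`, even positions are `0` for odd `m` and the digits of the
real produced by `σR` for even `m`. -/
def wII (S : Strat3 ℕ) (x : (ℕ × ℕ) → ℕ) (σR : Strat2 Baire) : (ℕ × ℕ × ℕ) → ℕ :=
  lex3_wf.fix fun p rec =>
    if h0 : p.1 = 0 then x p.2
    else if Odd p.2.2 then S p (fun r => rec r.1 r.2)
    else if Odd p.2.1 then 0
    else σR (p.1 - 1, p.2.1)
      (fun r => if Even r.1.2
        then (fun n => rec (1 + r.1.1, r.1.2, 2 * n) (lex3_block h0 r.2 _))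
        else (fun n => rec (1 + r.1.1, r.1.2, 2 * n + 1) (lex3_block h0 r.2 _)))
      (p.2.2 / 2)

lemma wII_eq (S : Strat3 ℕ) (x : (ℕ × ℕ) → ℕ) (σR : Strat2 Baire) (p : ℕ × ℕ × ℕ) :
    wII S x σR p =
      if p.1 = 0 then x p.2
      else if Odd p.2.2 then S p (fun r => wII S x σR r.1)
      else if Odd p.2.1 then 0
      else σR (p.1 - 1, p.2.1)
        (fun r => if Even r.1.2
          then (fun n => wII S x σR (1 + r.1.1, r.1.2, 2 * n))
          else (fun n => wII S x σR (1 + r.1.1, r.1.2, 2 * n + 1)))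
        (p.2.2 / 2) := by
  conv_lhs => rw [wII, WellFounded.fix_eq]
  split_ifs <;> rfl

lemma wI_zero (S : Strat3 ℕ) (x : (ℕ × ℕ) → ℕ) (y : (ℕ × ℕ) → Baire) (q : ℕ × ℕ) :
    wI S x y (0, q.1, q.2) = x q := by
  rw [wI_eq]; rfl

lemma wI_block (S : Strat3 ℕ) (x : (ℕ × ℕ) → ℕ) (y : (ℕ × ℕ) → Baire) (i m n : ℕ) :
    wI S x y (1 + i, m, n) =
      if Even n then S (1 + i, m, n) (fun r => wI S x y r.1)
      else if Even m then 0
      else y (i, m) (n / 2) := by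
  rw [wI_eq]
  have h1 : ¬ (1 + i = 0) := by omega
  have h2 : 1 + i - 1 = i := by omega
  rw [if_neg h1, h2]

lemma wII_zero (S : Strat3 ℕ) (x : (ℕ × ℕ) → ℕ) (σR : Strat2 Baire) (q : ℕ × ℕ) :
    wII S x σR (0, q.1, q.2) = x q := by
  rw [wII_eq]; rfl

lemma wII_block (S : Strat3 ℕ) (x : (ℕ × ℕ) → ℕ) (σR : Strat2 Baire) (i m n : ℕ) :
    wII S x σR (1 + i, m, n) =
      if Odd n then S (1 + i, m, n) (fun r => wII S x σR r.1)
      else if Odd m then 0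
      else σR (i, m)
        (fun r => if Even r.1.2
          then (fun k => wII S x σR (1 + r.1.1, r.1.2, 2 * k))
          else (fun k => wII S x σR (1 + r.1.1, r.1.2, 2 * k + 1)))
        (n / 2) := by
  rw [wII_eq]
  have h1 : ¬ (1 + i = 0) := by omega
  have h2 : 1 + i - 1 = i := by omega
  rw [if_neg h1, h2]

/-- `wI S x y p` only depends on the values of `y` that are "read" at positions
`lex3`-at-or-below `p`, namely those `y q` with `q.2` odd and `(1+q.1, q.2, 1)`
at or below `p`. -/
lemma wI_local (S : Strat3 ℕ) (x : (ℕ × ℕ) → ℕ) :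
    ∀ p : ℕ × ℕ × ℕ, ∀ y y' : (ℕ × ℕ) → Baire,
      (∀ q : ℕ × ℕ, ¬ Even q.2 →
        (lex3 (1 + q.1, q.2, 1) p ∨ (1 + q.1, q.2, 1) = p) → y q = y' q) →
      wI S x y p = wI S x y' p := by
  intro p
  induction p using WellFounded.induction lex3_wf with
  | _ p IH => ?_
  obtain ⟨a, b, c⟩ := p
  intro y y' hag
  rw [wI_eq, wI_eq]
  by_cases h0 : a = 0
  · rw [if_pos h0, if_pos h0]
  · rw [if_neg h0, if_neg h0]
    by_cases h1 : Even c
    · rw [if_pos h1, if_pos h1]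
      congr 1; funext r
      refine IH r.1 r.2 y y' (fun q hq hle => hag q hq (Or.inl ?_))
      rcases hle with h | h
      · exact lex3_trans h r.2
      · rw [h]; exact r.2
    · rw [if_neg h1, if_neg h1]
      by_cases h2 : Even b
      · rw [if_pos h2, if_pos h2]
      · rw [if_neg h2, if_neg h2]
        have hodd : c % 2 = 1 := Nat.not_even_iff.mp h1
        have hread : lex3 (1 + ((a, b, c).1 - 1), b, 1) (a, b, c) ∨
            (1 + ((a, b, c).1 - 1), b, 1) = (a, b, c) := by
          rcases Nat.lt_or_ge 1 c with hc | hc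
          · left; simp only [lex3, lex2, true_and, and_true]; omega
          · right; simp only [Prod.mk.injEq, eq_self_iff_true, true_and, and_true]; omega
        rw [hag ((a, b, c).1 - 1, b) h2 hread]

lemma partI (B : Set (((ℕ × ℕ) → ℕ) × ((ℕ × ℕ) → Baire))) (hB : IsOpen B) :
    IsOpen (GBpayoff B) := by
  have h1 : Continuous xPart := continuous_pi fun q => continuous_apply _
  have h2 : Continuous yPart := continuous_pi fun q => by
    by_cases hq : Even q.2
    · simp only [yPart, if_pos hq]; exact continuous_pi fun n => continuous_apply _
    · simp only [yPart, if_neg hq]; exact continuous_pi fun n => continuous_apply _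
  exact hB.preimage (h1.prodMk h2)

lemma partII (B : Set (((ℕ × ℕ) → ℕ) × ((ℕ × ℕ) → Baire))) (S : Strat3 ℕ)
    (hS : WinStrat3I (GBpayoff B) S) : WinStrat2I (AofB B) (restrict0 S) := by
  classical
  intro x hx
  refine ⟨fun q f => fun n =>
    wI S x (fun r => if h : lex2 r q then f ⟨r, h⟩ else fun _ => 0) (1 + q.1, q.2, 2 * n), ?_⟩
  intro y hy
  have hcons : ∀ p : ℕ × ℕ × ℕ, Even p.2.2 → wI S x y p = S p fun r => wI S x y r.1 := by
    intro p hp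
    obtain ⟨a, b, c⟩ := p
    replace hp : Even c := hp
    rcases Nat.eq_zero_or_pos a with h0 | h0
    · subst h0
      have hx' := hx (b, c) hp
      rw [show wI S x y (0, b, c) = x (b, c) from by rw [wI_eq]; rfl, hx']
      show S (0, b, c) _ = S (0, b, c) _
      congr 1
      funext r
      have hr0 : r.1.1 = 0 := by
        have := r.2; simp only [lex3] at this; omega
      show x r.1.2 = wI S x y r.1
      rw [wI_eq, if_pos hr0]
    · have ha : a = 1 + (a - 1) := by omega
      rw [ha, wI_block, if_pos hp]
  have hWmem := hS (wI S x y) hcons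
  have hxP : xPart (wI S x y) = x := by
    funext q
    show wI S x y (0, q.1, q.2) = x q
    rw [wI_eq]; rfl
  have hyP : yPart (wI S x y) = y := by
    funext q
    by_cases hq : Even q.2
    · have h1 : yPart (wI S x y) q = fun n => wI S x y (1 + q.1, q.2, 2 * n) := by
        simp only [yPart, if_pos hq]
      rw [h1, hy q hq]
      funext n
      refine wI_local S x (1 + q.1, q.2, 2 * n) y _ ?_
      intro q' hq' hle
      have he : q.2 % 2 = 0 := Nat.even_iff.mp hq
      have ho : q'.2 % 2 = 1 := Nat.not_even_iff.mp hq'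
      have hlt : lex2 q' q := by
        rcases hle with h | h
        · simp only [lex3, lex2, true_and, and_true] at h ⊢; omega
        · rw [Prod.mk.injEq, Prod.mk.injEq] at h
          simp only [lex2]; omega
      rw [dif_pos hlt]
    · have h1 : yPart (wI S x y) q = fun n => wI S x y (1 + q.1, q.2, 2 * n + 1) := by
        simp only [yPart, if_neg hq]
      rw [h1]
      funext n
      rw [wI_block, if_neg (by simp [Nat.even_iff, Nat.add_mod, Nat.mul_mod] : ¬ Even (2 * n + 1)),
        if_neg hq]
      have h2 : (2 * n + 1) / 2 = n := by omega
      rw [h2]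
  show (x, y) ∈ B
  have hpair : (xPart (wI S x y), yPart (wI S x y)) = (x, y) := by rw [hxP, hyP]
  rw [← hpair]
  exact hWmem

lemma partIII (B : Set (((ℕ × ℕ) → ℕ) × ((ℕ × ℕ) → Baire))) (S : Strat3 ℕ)
    (hS : WinStrat3II (GBpayoff B) S) : WinStrat2II (AofB B) (restrict0 S) := by
  intro x hx hmem
  obtain ⟨σR, hσ⟩ := hmem
  have hcons : ∀ p : ℕ × ℕ × ℕ, Odd p.2.2 → wII S x σR p = S p fun r => wII S x σR r.1 := by
    intro p hp
    obtain ⟨a, b, c⟩ := p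
    replace hp : Odd c := hp
    rcases Nat.eq_zero_or_pos a with h0 | h0
    · subst h0
      have hx' := hx (b, c) hp
      rw [show wII S x σR (0, b, c) = x (b, c) from by rw [wII_eq]; rfl, hx']
      show S (0, b, c) _ = S (0, b, c) _
      congr 1
      funext r
      have hr0 : r.1.1 = 0 := by
        have := r.2; simp only [lex3] at this; omega
      show x r.1.2 = wII S x σR r.1
      rw [wII_eq, if_pos hr0]
    · have ha : a = 1 + (a - 1) := by omega
      rw [ha, wII_block, if_pos hp]
  have hWnot := hS (wII S x σR) hcons
  have hxP : xPart (wII S x σR) = x := by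
    funext q
    show wII S x σR (0, q.1, q.2) = x q
    rw [wII_eq]; rfl
  have hy : ∀ q : ℕ × ℕ, Even q.2 →
      yPart (wII S x σR) q = σR q (fun r => yPart (wII S x σR) r.1) := by
    intro q hq
    have h1 : yPart (wII S x σR) q = fun n => wII S x σR (1 + q.1, q.2, 2 * n) := by
      simp only [yPart, if_pos hq]
    rw [h1]
    funext n
    rw [wII_block, if_neg (by simp [Nat.odd_iff, Nat.mul_mod] : ¬ Odd (2 * n)),
      if_neg (by simp [Nat.odd_iff, Nat.even_iff.mp hq] : ¬ Odd q.2)]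
    have h2 : 2 * n / 2 = n := by omega
    rw [h2]
    rfl
  have hin := hσ (yPart (wII S x σR)) hy
  refine hWnot ?_
  show (xPart (wII S x σR), yPart (wII S x σR)) ∈ B
  rw [hxP]
  exact hin

/-- (i) If `B` is open then the payoff of `𝔾_B` is open; (ii) if a player has a winning
strategy `S` in `𝔾_B`, then the restriction of `S` to the positions `(0,m,n)` is a
winning strategy for that same player in the game of length ω² on ℕ with payoff
`A = {x : {y : (x,y) ∈ B} ∈ ⅁ℝ_{ω²}}`; in particular, if `𝔾_B` is determined then so is
the game of length ω² on ℕ with payoff `A`. -/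
theorem auxiliary_game_GB (B : Set (((ℕ × ℕ) → ℕ) × ((ℕ × ℕ) → Baire))) :
    (IsOpen B → IsOpen (GBpayoff B)) ∧
    (∀ S : Strat3 ℕ, WinStrat3I (GBpayoff B) S → WinStrat2I (AofB B) (restrict0 S)) ∧
    (∀ S : Strat3 ℕ, WinStrat3II (GBpayoff B) S → WinStrat2II (AofB B) (restrict0 S)) ∧
    (Determined3 (GBpayoff B) → Determined2 (AofB B)) := by
  refine ⟨partI B, partII B, partIII B, ?_⟩
  rintro (⟨S, hS⟩ | ⟨S, hS⟩)
  · exact Or.inl ⟨_, partII B S hS⟩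
  · exact Or.inr ⟨_, partIII B S hS⟩

end
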